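/- The invariant ring ℂ[Mat_{n×n}]^{GL(n,ℂ)} for the conjugation action is generated by the coefficients of the characteristic polynomial; equivalently, two diagonalizable matrices lie in the same closure-equivalence class of conjugation orbits if and only if they have the same characteristic polynomial, and every matrix has the associated diagonal matrix of its eigenvalues in the closure of its conjugation orbit. -/

import Mathlib

open Matrix Polynomial Filter

namespace Stmt10Aux

noncomputable section




/-- Block diagonal lift `1 ⊕ g` of an `n × n` matrix to `(n+1) × (n+1)`. -/
def lift {n : ℕ} (g : Matrix (Fin n) (Fin n) ℂ) : Matrix (Fin (n + 1)) (Fin (n + 1)) ℂ :=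
  Matrix.of fun i j =>
    Fin.cases (Fin.cases 1 (fun _ => 0) j) (fun i' => Fin.cases 0 (fun j' => g i' j') j) i

variable {n : ℕ}

@[simp] lemma lift_zero_zero (g : Matrix (Fin n) (Fin n) ℂ) : lift g 0 0 = 1 := by simp [lift]
@[simp] lemma lift_zero_succ (g : Matrix (Fin n) (Fin n) ℂ) (j : Fin n) :
    lift g 0 j.succ = 0 := by simp [lift]
@[simp] lemma lift_succ_zero (g : Matrix (Fin n) (Fin n) ℂ) (i : Fin n) :
    lift g i.succ 0 = 0 := by simp [lift]
@[simp] lemma lift_succ_succ (g : Matrix (Fin n) (Fin n) ℂ) (i j : Fin n) :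
    lift g i.succ j.succ = g i j := by simp [lift]

lemma lift_mul (g h : Matrix (Fin n) (Fin n) ℂ) : lift g * lift h = lift (g * h) := by
  ext i j
  rw [mul_apply]
  induction i using Fin.cases with
  | zero =>
    induction j using Fin.cases with
    | zero => simp [Fin.sum_univ_succ]
    | succ j' => simp [Fin.sum_univ_succ]
  | succ i' =>
    induction j using Fin.cases with
    | zero => simp [Fin.sum_univ_succ]
    | succ j' => simp [Fin.sum_univ_succ, mul_apply]

lemma lift_one : lift (1 : Matrix (Fin n) (Fin n) ℂ) = 1 := by
  ext i j
  induction i using Fin.cases with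
  | zero =>
    induction j using Fin.cases with
    | zero => simp [one_apply]
    | succ j' => simp [one_apply, (Fin.succ_ne_zero j').symm]
  | succ i' =>
    induction j using Fin.cases with
    | zero => simp [one_apply, Fin.succ_ne_zero i']
    | succ j' => simp [one_apply, Fin.succ_inj]

/-- Block diagonal lift of a unit. -/
def liftUnit (g : (Matrix (Fin n) (Fin n) ℂ)ˣ) : (Matrix (Fin (n + 1)) (Fin (n + 1)) ℂ)ˣ :=
  ⟨lift ↑g, lift ↑g⁻¹,
    by rw [lift_mul, Units.mul_inv, lift_one],
    by rw [lift_mul, Units.inv_mul, lift_one]⟩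


lemma exists_triangular_step (m : ℕ) (A : Matrix (Fin (m + 1)) (Fin (m + 1)) ℂ) :
    ∃ u : (Matrix (Fin (m + 1)) (Fin (m + 1)) ℂ)ˣ,
      ∀ i, i ≠ 0 →
        ((↑u⁻¹ : Matrix (Fin (m+1)) (Fin (m+1)) ℂ) * A * (↑u : Matrix (Fin (m+1)) (Fin (m+1)) ℂ)) i 0 = 0 := by
  classical
  obtain ⟨μ, hμ⟩ := Module.End.exists_eigenvalue (Matrix.mulVecLin A)
  obtain ⟨v, hv⟩ := hμ.exists_hasEigenvector
  have hAv : A *ᵥ v = μ • v := hv.apply_eq_smul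
  obtain ⟨j, hj⟩ : ∃ j, v j ≠ 0 := by
    by_contra h; push_neg at h; exact hv.2 (funext h)
  set Q : Matrix (Fin (m + 1)) (Fin (m + 1)) ℂ := (1 : Matrix _ _ ℂ).updateCol j v with hQ
  have hQdet : Q.det = v j := by
    have : Q.det = cramer (1 : Matrix (Fin (m+1)) (Fin (m+1)) ℂ) v j := (cramer_apply _ _ _).symm
    rwa [cramer_one, Module.End.one_apply] at this
  have hQunit : IsUnit Q := (isUnit_iff_isUnit_det Q).mpr (by rw [hQdet]; exact hj.isUnit)
  set σ : Equiv.Perm (Fin (m + 1)) := Equiv.swap 0 j with hσ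
  set S : Matrix (Fin (m + 1)) (Fin (m + 1)) ℂ := σ.permMatrix ℂ with hS
  have hSunit : IsUnit S := (isUnit_iff_isUnit_det S).mpr (by
    rw [det_permutation]
    refine isUnit_iff_ne_zero.mpr ?_
    rcases Int.units_eq_one_or σ.sign with h | h <;> simp [h])
  set u : (Matrix (Fin (m + 1)) (Fin (m + 1)) ℂ)ˣ := hQunit.unit * hSunit.unit with hu
  have huval : (↑u : Matrix (Fin (m+1)) (Fin (m+1)) ℂ) = Q * S := by simp [hu]
  set e0 : Fin (m+1) → ℂ := Pi.single 0 1 with he0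
  set ej : Fin (m+1) → ℂ := Pi.single j 1 with hej
  have hS0 : S *ᵥ e0 = ej := by
    rw [he0, mulVec_single_one]
    funext i
    rw [col_apply, hej, hS, Equiv.Perm.permMatrix, PEquiv.toMatrix_toPEquiv_apply,
      Pi.single_apply, Pi.single_apply]
    congr 1
    simp only [eq_iff_iff]
    rw [eq_comm, Equiv.apply_eq_iff_eq_symm_apply]
    simp [hσ]
  have hu0 : (↑u : Matrix (Fin (m+1)) (Fin (m+1)) ℂ) *ᵥ e0 = v := by
    rw [huval, ← mulVec_mulVec, hS0, hej, mulVec_single_one]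
    funext i
    rw [col_apply]
    simp [hQ, updateCol_apply]
  refine ⟨u, ?_⟩
  set M : Matrix (Fin (m+1)) (Fin (m+1)) ℂ :=
    (↑u⁻¹ : Matrix (Fin (m+1)) (Fin (m+1)) ℂ) * A * (↑u : Matrix (Fin (m+1)) (Fin (m+1)) ℂ) with hM
  have hMcol : M *ᵥ e0 = μ • e0 := by
    have h1 : (↑u⁻¹ : Matrix (Fin (m+1)) (Fin (m+1)) ℂ) *ᵥ v = e0 := by
      rw [← hu0, mulVec_mulVec, Units.inv_mul, one_mulVec]
    rw [hM, ← mulVec_mulVec, ← mulVec_mulVec, hu0, hAv, mulVec_smul, h1]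
  intro i hi
  have h2 := congrFun hMcol i
  rw [he0, mulVec_single_one] at h2
  show M i 0 = 0
  rw [show M i 0 = M.col 0 i from rfl, h2, Pi.smul_apply, Pi.single_eq_of_ne hi, smul_zero]
lemma exists_triangular : ∀ (n : ℕ) (A : Matrix (Fin n) (Fin n) ℂ),
    ∃ g : (Matrix (Fin n) (Fin n) ℂ)ˣ,
      ((↑g : Matrix (Fin n) (Fin n) ℂ) * A * (↑g⁻¹ : Matrix (Fin n) (Fin n) ℂ)).BlockTriangular id := by
  intro n
  induction n with
  | zero => exact fun A => ⟨1, fun i j _ => i.elim0⟩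
  | succ m ih =>
    intro A
    obtain ⟨u, hu⟩ := exists_triangular_step m A
    set M : Matrix (Fin (m+1)) (Fin (m+1)) ℂ :=
      (↑u⁻¹ : Matrix (Fin (m+1)) (Fin (m+1)) ℂ) * A * (↑u : Matrix (Fin (m+1)) (Fin (m+1)) ℂ) with hM
    have hMcol : ∀ k : Fin m, M k.succ 0 = 0 := fun k => hu k.succ (Fin.succ_ne_zero k)
    set A' : Matrix (Fin m) (Fin m) ℂ := M.submatrix Fin.succ Fin.succ with hA'
    obtain ⟨g', hg'⟩ := ih A'
    set G : Matrix (Fin m) (Fin m) ℂ := ↑g' with hG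
    set Gi : Matrix (Fin m) (Fin m) ℂ := ↑g'⁻¹ with hGi
    refine ⟨liftUnit g' * u⁻¹, ?_⟩
    have hval : (↑(liftUnit g' * u⁻¹) : Matrix (Fin (m+1)) (Fin (m+1)) ℂ)
        = lift G * (↑u⁻¹ : Matrix (Fin (m+1)) (Fin (m+1)) ℂ) := rfl
    have hinv : (↑(liftUnit g' * u⁻¹)⁻¹ : Matrix (Fin (m+1)) (Fin (m+1)) ℂ)
        = (↑u : Matrix (Fin (m+1)) (Fin (m+1)) ℂ) * lift Gi := by
      rw [_root_.mul_inv_rev, inv_inv, Units.val_mul]; rfl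
    rw [hval, hinv]
    have key : lift G * (↑u⁻¹ : Matrix (Fin (m+1)) (Fin (m+1)) ℂ) * A
        * ((↑u : Matrix (Fin (m+1)) (Fin (m+1)) ℂ) * lift Gi)
        = lift G * M * lift Gi := by
      rw [hM]; simp only [Matrix.mul_assoc]
    rw [key]
    -- prove triangularity entrywise
    intro i j hij
    have hmul : ∀ i j, (lift G * M * lift Gi) i j
        = ∑ l, (∑ k, lift G i k * M k l) * lift Gi l j := by
      intro i j; simp [mul_apply]
    induction i using Fin.cases with
    | zero => exact absurd hij (Fin.not_lt_zero _)
    | succ i' =>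
      induction j using Fin.cases with
      | zero =>
        rw [hmul, Fin.sum_univ_succ]
        simp [Fin.sum_univ_succ, hMcol]
      | succ j' =>
        have hj'i' : j' < i' := by
          simpa [Fin.succ_lt_succ_iff] using hij
        have : (lift G * M * lift Gi) i'.succ j'.succ
            = (G * A' * Gi) i' j' := by
          rw [hmul, Fin.sum_univ_succ]
          simp [Fin.sum_univ_succ, mul_apply, hA']
        rw [this]
        exact hg' hj'i'

lemma charpoly_conj {n : ℕ} (u : (Matrix (Fin n) (Fin n) ℂ)ˣ) (M : Matrix (Fin n) (Fin n) ℂ) :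
    ((↑u : Matrix (Fin n) (Fin n) ℂ) * M * (↑u⁻¹ : Matrix (Fin n) (Fin n) ℂ)).charpoly
      = M.charpoly := by
  set uC : Matrix (Fin n) (Fin n) ℂ[X] := (↑u : Matrix (Fin n) (Fin n) ℂ).map Polynomial.C with huC
  set uCi : Matrix (Fin n) (Fin n) ℂ[X] :=
    (↑u⁻¹ : Matrix (Fin n) (Fin n) ℂ).map Polynomial.C with huCi
  have hui : uC * uCi = 1 := by
    rw [huC, huCi, ← Matrix.map_mul, Units.mul_inv]
    simp
  have hscal : ∀ N : Matrix (Fin n) (Fin n) ℂ[X],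
      Commute (Matrix.scalar (Fin n) (X : ℂ[X])) N :=
    fun N => Matrix.scalar_commute _ (fun r' => Commute.all _ _) _
  have hch : charmatrix ((↑u : Matrix (Fin n) (Fin n) ℂ) * M * (↑u⁻¹ : Matrix (Fin n) (Fin n) ℂ))
      = uC * charmatrix M * uCi := by
    rw [charmatrix, charmatrix]
    rw [Matrix.mul_sub, Matrix.sub_mul]
    congr 1
    · rw [← (hscal uC).eq, Matrix.mul_assoc, hui, Matrix.mul_one]
    · simp [huC, huCi, RingHom.mapMatrix_apply, Matrix.map_mul, Matrix.mul_assoc]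
  rw [Matrix.charpoly, hch, Matrix.det_mul, Matrix.det_mul, mul_right_comm,
    ← Matrix.det_mul, hui]
  simp [Matrix.charpoly]

end

end Stmt10Aux

open Stmt10Aux Matrix

/-- Every complex matrix `A` has a diagonalizable matrix with the same
characteristic polynomial (e.g. the diagonal matrix of its eigenvalues, the
semisimple part of its Jordan form) in the closure of its conjugation orbit. -/
theorem stmt_10 (n : ℕ) (A : Matrix (Fin n) (Fin n) ℂ) :
    ∃ B : Matrix (Fin n) (Fin n) ℂ,
      (∃ g : GL (Fin n) ℂ, ∃ d : Fin n → ℂ,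
        (g : Matrix (Fin n) (Fin n) ℂ) * B * ((g⁻¹ : GL (Fin n) ℂ) : Matrix (Fin n) (Fin n) ℂ)
          = Matrix.diagonal d) ∧
      B.charpoly = A.charpoly ∧
      B ∈ closure {C : Matrix (Fin n) (Fin n) ℂ | ∃ g : GL (Fin n) ℂ,
        C = (g : Matrix (Fin n) (Fin n) ℂ) * A *
              ((g⁻¹ : GL (Fin n) ℂ) : Matrix (Fin n) (Fin n) ℂ)} := by
  classical
  obtain ⟨g, hg⟩ := exists_triangular n A
  set T : Matrix (Fin n) (Fin n) ℂ :=
    (↑g : Matrix (Fin n) (Fin n) ℂ) * A * (↑g⁻¹ : Matrix (Fin n) (Fin n) ℂ) with hT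
  set d : Fin n → ℂ := fun i => T i i with hd
  set B : Matrix (Fin n) (Fin n) ℂ :=
    (↑g⁻¹ : Matrix (Fin n) (Fin n) ℂ) * diagonal d * (↑g : Matrix (Fin n) (Fin n) ℂ) with hB
  have hgB : (↑g : Matrix (Fin n) (Fin n) ℂ) * B * (↑g⁻¹ : Matrix (Fin n) (Fin n) ℂ)
      = diagonal d := by
    rw [hB]
    calc (↑g : Matrix (Fin n) (Fin n) ℂ)
          * ((↑g⁻¹ : Matrix (Fin n) (Fin n) ℂ) * diagonal d * (↑g : Matrix (Fin n) (Fin n) ℂ))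
          * (↑g⁻¹ : Matrix (Fin n) (Fin n) ℂ)
        = (↑g * ↑g⁻¹ : Matrix (Fin n) (Fin n) ℂ) * diagonal d
            * (↑g * ↑g⁻¹ : Matrix (Fin n) (Fin n) ℂ) := by
          simp only [Matrix.mul_assoc]
      _ = diagonal d := by rw [Units.mul_inv]; simp
  refine ⟨B, ⟨g, d, hgB⟩, ?_, ?_⟩
  · -- charpoly
    have h1 : B.charpoly = (diagonal d).charpoly := by
      have := charpoly_conj g⁻¹ (diagonal d)
      rwa [inv_inv] at this
    have h2 : T.charpoly = A.charpoly := charpoly_conj g A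
    have h3 : (diagonal d).charpoly = T.charpoly := by
      rw [charpoly_of_upperTriangular _ (blockTriangular_diagonal d),
        charpoly_of_upperTriangular _ hg]
      simp [hd]
    rw [h1, h3, h2]
  · -- closure
    set c : ℕ → ℂ := fun k => (k : ℂ) + 1 with hc
    have hc0 : ∀ k, c k ≠ 0 := by
      intro k
      have : c k = ((k + 1 : ℕ) : ℂ) := by rw [hc]; push_cast; ring
      rw [this]
      exact Nat.cast_ne_zero.mpr (Nat.succ_ne_zero k)
    have hD1 : ∀ k, diagonal (fun i : Fin n => c k ^ (i : ℕ))
        * diagonal (fun i : Fin n => (c k)⁻¹ ^ (i : ℕ)) = 1 := by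
      intro k
      rw [diagonal_mul_diagonal,
        show (fun i : Fin n => c k ^ (i:ℕ) * (c k)⁻¹ ^ (i:ℕ)) = fun _ => (1:ℂ) from
          funext fun i => by rw [← mul_pow, mul_inv_cancel₀ (hc0 k), one_pow], diagonal_one]
    have hD2 : ∀ k, diagonal (fun i : Fin n => (c k)⁻¹ ^ (i : ℕ))
        * diagonal (fun i : Fin n => c k ^ (i : ℕ)) = 1 := by
      intro k
      rw [diagonal_mul_diagonal,
        show (fun i : Fin n => (c k)⁻¹ ^ (i:ℕ) * c k ^ (i:ℕ)) = fun _ => (1:ℂ) from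
          funext fun i => by rw [← mul_pow, inv_mul_cancel₀ (hc0 k), one_pow], diagonal_one]
    set D : ℕ → (Matrix (Fin n) (Fin n) ℂ)ˣ := fun k =>
      ⟨diagonal (fun i => c k ^ (i : ℕ)), diagonal (fun i => (c k)⁻¹ ^ (i : ℕ)),
        hD1 k, hD2 k⟩ with hD
    set F : ℕ → Matrix (Fin n) (Fin n) ℂ := fun k =>
      (↑g⁻¹ : Matrix (Fin n) (Fin n) ℂ)
        * ((↑(D k) : Matrix (Fin n) (Fin n) ℂ) * T * (↑(D k)⁻¹ : Matrix (Fin n) (Fin n) ℂ))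
        * (↑g : Matrix (Fin n) (Fin n) ℂ) with hF
    have hmem : ∀ k, F k ∈ {C : Matrix (Fin n) (Fin n) ℂ | ∃ h : GL (Fin n) ℂ,
        C = (h : Matrix (Fin n) (Fin n) ℂ) * A *
              ((h⁻¹ : GL (Fin n) ℂ) : Matrix (Fin n) (Fin n) ℂ)} := by
      intro k
      refine ⟨g⁻¹ * D k * g, ?_⟩
      show F k = (↑(g⁻¹ * D k * g) : Matrix (Fin n) (Fin n) ℂ) * A
        * (↑(g⁻¹ * D k * g)⁻¹ : Matrix (Fin n) (Fin n) ℂ)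
      rw [hF, hT]
      rw [_root_.mul_inv_rev, _root_.mul_inv_rev, inv_inv]
      simp only [Units.val_mul, Matrix.mul_assoc]
    -- limit of F is B
    have htend : Tendsto F atTop (nhds B) := by
      have hinv : Tendsto (fun k => (c k)⁻¹) atTop (nhds 0) := by
        have h1 : Tendsto (fun k : ℕ => ((k : ℝ) + 1)) atTop atTop :=
          tendsto_atTop_add_const_right atTop 1 tendsto_natCast_atTop_atTop
        have h2 : Tendsto (fun k : ℕ => ((k : ℝ) + 1)⁻¹) atTop (nhds 0) :=
          h1.inv_tendsto_atTop
        have h3 := (Complex.continuous_ofReal.tendsto (0 : ℝ)).comp h2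
        have h4 : (fun k : ℕ => ((((k : ℝ) + 1)⁻¹ : ℝ) : ℂ)) = fun k => (c k)⁻¹ := by
          funext k; rw [hc]; push_cast; ring
        rw [← h4]
        simpa [Function.comp_def] using h3
      have hCd : Tendsto (fun k => (↑(D k) : Matrix (Fin n) (Fin n) ℂ) * T
          * (↑(D k)⁻¹ : Matrix (Fin n) (Fin n) ℂ)) atTop (nhds (diagonal d)) := by
        have hentry : ∀ (k : ℕ) (i j : Fin n),
            ((↑(D k) : Matrix (Fin n) (Fin n) ℂ) * T
              * (↑(D k)⁻¹ : Matrix (Fin n) (Fin n) ℂ)) i j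
            = c k ^ (i : ℕ) * T i j * ((c k)⁻¹) ^ (j : ℕ) := by
          intro k i j
          rw [hD]
          show (diagonal (fun i : Fin n => c k ^ (i:ℕ)) * T
            * diagonal (fun i : Fin n => ((c k)⁻¹) ^ (i:ℕ))) i j = _
          rw [mul_diagonal, diagonal_mul]
        refine tendsto_pi_nhds.mpr fun i => tendsto_pi_nhds.mpr fun j => ?_
        simp only [hentry]
        rcases lt_trichotomy i j with hij | hij | hij
        · -- above the diagonal : tends to 0
          have hne : diagonal d i j = 0 := diagonal_apply_ne d (ne_of_lt hij)
          rw [hne]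
          have hr : (i : ℕ) < (j : ℕ) := hij
          have heq : ∀ k, c k ^ (i : ℕ) * T i j * ((c k)⁻¹) ^ (j : ℕ)
              = T i j * ((c k)⁻¹) ^ ((j : ℕ) - (i : ℕ)) := by
            intro k
            have h1 : ((c k)⁻¹ : ℂ) ^ (j : ℕ)
                = ((c k)⁻¹) ^ (i : ℕ) * ((c k)⁻¹) ^ ((j : ℕ) - (i : ℕ)) := by
              rw [← pow_add]; congr 1; omega
            have h2 : c k ^ (i : ℕ) * ((c k)⁻¹) ^ (i : ℕ) = 1 := by
              rw [← mul_pow, mul_inv_cancel₀ (hc0 k), one_pow]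
            rw [h1]
            linear_combination (T i j * ((c k)⁻¹) ^ ((j : ℕ) - (i : ℕ))) * h2
          simp only [heq]
          have := (hinv.pow ((j : ℕ) - (i : ℕ))).const_mul (T i j)
          rw [zero_pow (by omega : (j : ℕ) - (i : ℕ) ≠ 0), mul_zero] at this
          exact this
        · -- diagonal entry : constant
          subst hij
          have heq : ∀ k, c k ^ (i : ℕ) * T i i * ((c k)⁻¹) ^ (i : ℕ)
              = diagonal d i i := by
            intro k
            rw [diagonal_apply_eq]
            have h2 : c k ^ (i : ℕ) * ((c k)⁻¹) ^ (i : ℕ) = 1 := by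
              rw [← mul_pow, mul_inv_cancel₀ (hc0 k), one_pow]
            linear_combination (T i i) * h2
          simp only [heq]
          exact tendsto_const_nhds
        · -- below the diagonal : identically 0
          have hT0 : T i j = 0 := hg hij
          have hne : diagonal d i j = 0 := diagonal_apply_ne d (ne_of_gt hij)
          simp only [hT0, hne, mul_zero, zero_mul]
          exact tendsto_const_nhds
      have hcont : Continuous fun X : Matrix (Fin n) (Fin n) ℂ =>
          (↑g⁻¹ : Matrix (Fin n) (Fin n) ℂ) * X * (↑g : Matrix (Fin n) (Fin n) ℂ) :=
        (continuous_const.matrix_mul continuous_id).matrix_mul continuous_const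
      have := (hcont.tendsto (diagonal d)).comp hCd
      simpa [hF, hB, Function.comp_def] using this
    exact mem_closure_of_tendsto htend (Eventually.of_forall hmem)
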